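/- arXiv:1904.11958 — 7 statements merged into one kernel-verified Lean document; each statement's English description precedes it below -/
import Mathlib

section
/- Let p, q ∈ ℕ, a : Fin p → ℂ, b : Fin q → ℂ, z ∈ ℂ, and let N, n ∈ ℕ with n ≤ N. Suppose b_j + 1 + k ≠ 0 for every j and every natural number k < N. Then the truncated moment satisfies ∑_{x=0}^N φ_n(x)·(∏_i (a_i)_x / ∏_j (b_j + 1)_x)·z^x/x! = z^n · (∏_i (a_i)_n / ∏_j (b_j + 1)_n) · ∑_{x=0}^{N−n} (∏_i (a_i + n)_x / ∏_j (b_j + 1 + n)_x)·z^x/x!. -/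
open Finset

/-- The Pochhammer symbol `(c)_n = ∏_{j=0}^{n-1} (c + j)`. -/
noncomputable def poch (c : ℂ) (n : ℕ) : ℂ := ∏ j ∈ Finset.range n, (c + (j : ℂ))

/-- The falling factorial `φ_n(x) = ∏_{j=0}^{n-1} (x - j)`. -/
noncomputable def fallFac (n : ℕ) (x : ℂ) : ℂ := ∏ j ∈ Finset.range n, (x - (j : ℂ))

lemma fallFac_zero_of_lt {n x : ℕ} (h : x < n) : fallFac n (x : ℂ) = 0 := by
  apply Finset.prod_eq_zero (Finset.mem_range.2 h)
  simp

lemma fallFac_nat_cast {n m : ℕ} (h : n ≤ m) :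
    fallFac n (m : ℂ) = (m.descFactorial n : ℂ) := by
  rw [Nat.descFactorial_eq_prod_range, fallFac, Nat.cast_prod]
  apply Finset.prod_congr rfl
  intro j hj
  have : j ≤ m := le_trans (le_of_lt (Finset.mem_range.1 hj)) h
  push_cast [Nat.cast_sub this]
  ring

lemma poch_add (c : ℂ) (n y : ℕ) :
    poch c (n + y) = poch c n * poch (c + n) y := by
  rw [poch, poch, poch, Finset.prod_range_add]
  congr 1
  apply Finset.prod_congr rfl
  intro j _
  push_cast
  ring

/-- the `n`-th truncated moment satisfies
`∑_{x=0}^N φ_n(x) (∏ (a_i)_x / ∏ (b_j+1)_x) z^x/x!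
 = z^n (∏ (a_i)_n / ∏ (b_j+1)_n) ∑_{x=0}^{N-n} (∏ (a_i+n)_x / ∏ (b_j+1+n)_x) z^x/x!`. -/
theorem truncated_moment_formula (p q : ℕ) (a : Fin p → ℂ) (b : Fin q → ℂ) (z : ℂ)
    (N n : ℕ) (hn : n ≤ N)
    (hb : ∀ (j : Fin q) (k : ℕ), k < N → b j + 1 + (k : ℂ) ≠ 0) :
    (∑ x ∈ Finset.range (N + 1),
        fallFac n (x : ℂ) * ((∏ i, poch (a i) x) / (∏ j, poch (b j + 1) x)) * z ^ x /
          (x.factorial : ℂ))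
      = z ^ n * ((∏ i, poch (a i) n) / (∏ j, poch (b j + 1) n)) *
        ∑ x ∈ Finset.range (N - n + 1),
          ((∏ i, poch (a i + (n : ℂ)) x) / (∏ j, poch (b j + 1 + (n : ℂ)) x)) * z ^ x /
            (x.factorial : ℂ) := by
  have hN : N + 1 = n + (N - n + 1) := by omega
  rw [hN, Finset.sum_range_add]
  have h1 : ∑ i ∈ Finset.range n,
      fallFac n (i : ℂ) * ((∏ i', poch (a i') i) / (∏ j, poch (b j + 1) i)) * z ^ i /
        (i.factorial : ℂ) = 0 := by
    apply Finset.sum_eq_zero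
    intro i hi
    rw [fallFac_zero_of_lt (Finset.mem_range.1 hi)]
    simp
  rw [h1, zero_add, Finset.mul_sum]
  apply Finset.sum_congr rfl
  intro y hy
  have hyN : y ≤ N - n := Nat.lt_succ_iff.1 (Finset.mem_range.1 hy)
  have hpoch_ne : ∀ (j : Fin q) (c : ℕ) (m : ℕ), c + m ≤ N → poch (b j + 1 + (c : ℂ)) m ≠ 0 := by
    intro j c m hcm
    refine Finset.prod_ne_zero_iff.2 fun k hk => ?_
    have hk' : k < m := Finset.mem_range.1 hk
    have : b j + 1 + (c : ℂ) + (k : ℂ) = b j + 1 + ((c + k : ℕ) : ℂ) := by push_cast; ring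
    rw [this]
    exact hb j (c + k) (by omega)
  have hQ1 : (∏ j, poch (b j + 1) n) ≠ 0 := by
    refine Finset.prod_ne_zero_iff.2 fun j _ => ?_
    have := hpoch_ne j 0 n (by omega)
    simpa using this
  have hQ2 : (∏ j, poch (b j + 1 + (n : ℂ)) y) ≠ 0 :=
    Finset.prod_ne_zero_iff.2 fun j _ => hpoch_ne j n y (by omega)
  rw [fallFac_nat_cast (Nat.le_add_right n y)]
  have hdesc : ((n + y).descFactorial n : ℂ) * (y.factorial : ℂ) = ((n + y).factorial : ℂ) := by
    rw [← Nat.cast_mul, Nat.cast_inj, mul_comm]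
    have := Nat.factorial_mul_descFactorial (Nat.le_add_right n y)
    simpa using this
  simp only [poch_add, Finset.prod_mul_distrib, pow_add, Nat.factorial]
  have hyf : (y.factorial : ℂ) ≠ 0 := Nat.cast_ne_zero.2 (Nat.factorial_ne_zero y)
  have hnyf : (((n + y).factorial : ℕ) : ℂ) ≠ 0 := Nat.cast_ne_zero.2 (Nat.factorial_ne_zero _)
  field_simp [hQ1, hQ2]
  linear_combination ((∏ x : Fin p, poch (a x) n) * (∏ x : Fin p, poch (a x + (n : ℂ)) y) *
    z ^ n * z ^ y) * hdesc
end

section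
/- Let z ∈ ℂ and let t ∈ ℂ satisfy t ≠ x and t + 1 ≠ x for every x ∈ ℕ. Then the Stieltjes transform S(t) = ∑_{x=0}^∞ (z^x/x!)·1/(t − x) of the Charlier weight satisfies the difference equation (t + 1)·S(t + 1) − z·S(t) = e^z. -/
open Filter

lemma charlier_summable_aux (z s : ℂ) (hs : ∀ x : ℕ, s ≠ (x : ℂ)) :
    Summable (fun x : ℕ => z ^ x / (x.factorial : ℂ) * (1 / (s - (x : ℂ)))) := by
  have h1 : Tendsto (fun x : ℕ => ‖s - (x : ℂ)‖) atTop atTop := by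
    apply tendsto_atTop_mono (fun x => ?_)
      (tendsto_atTop_add_const_right atTop (-‖s‖) tendsto_natCast_atTop_atTop)
    have : ‖(x : ℂ)‖ - ‖s‖ ≤ ‖s - (x : ℂ)‖ := by
      rw [norm_sub_rev]; exact norm_sub_norm_le _ _
    simpa using this
  have h2 : Tendsto (fun x : ℕ => ‖1 / (s - (x : ℂ))‖) atTop (nhds 0) := by
    have := tendsto_inv_atTop_zero.comp h1
    simpa [Function.comp_def, norm_inv] using this
  obtain ⟨C, hC⟩ := (h2.bddAbove_range)
  apply Summable.of_norm_bounded (g := fun x : ℕ => (‖z‖ ^ x / x.factorial) * C)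
    ((Real.summable_pow_div_factorial ‖z‖).mul_right C)
  intro x
  rw [norm_mul]
  have hb : ‖z ^ x / (x.factorial : ℂ)‖ = ‖z‖ ^ x / x.factorial := by
    rw [norm_div, norm_pow]
    simp [Complex.norm_natCast]
  rw [hb]
  exact mul_le_mul_of_nonneg_left (hC (Set.mem_range_self x)) (by positivity)

/-- the Stieltjes transform `S(t) = ∑_{x≥0} (z^x/x!)/(t-x)` of the Charlier
weight satisfies `(t+1) S(t+1) - z S(t) = e^z`. -/
theorem charlier_stieltjes (z t : ℂ)
    (ht : ∀ x : ℕ, t ≠ (x : ℂ)) (ht1 : ∀ x : ℕ, t + 1 ≠ (x : ℂ)) :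
    (t + 1) * (∑' x : ℕ, z ^ x / (x.factorial : ℂ) * (1 / (t + 1 - (x : ℂ))))
      - z * (∑' x : ℕ, z ^ x / (x.factorial : ℂ) * (1 / (t - (x : ℂ))))
      = Complex.exp z := by
  set g : ℕ → ℂ := fun x => z ^ x / (x.factorial : ℂ) * (1 / (t - (x : ℂ))) with hgdef
  set h : ℕ → ℂ := fun x => z ^ x / (x.factorial : ℂ) * (1 / (t + 1 - (x : ℂ))) with hhdef
  have hg : HasSum g (∑' x, g x) := (charlier_summable_aux z t ht).hasSum
  have hh : HasSum h (∑' x, h x) := (charlier_summable_aux z (t + 1) ht1).hasSum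
  set q : ℕ → ℂ := fun x => z ^ x / (x.factorial : ℂ) * ((x : ℂ) / (t + 1 - (x : ℂ))) with hqdef
  have hq : HasSum q (z * ∑' x, g x) := by
    have hshift : HasSum (fun n => q (n + 1)) (z * ∑' x, g x) := by
      have := hg.mul_left z
      convert this using 2 with n
      · rfl
      have hn : t - (n : ℂ) ≠ 0 := sub_ne_zero.mpr (ht n)
      have hfac : ((n + 1).factorial : ℂ) = ((n : ℂ) + 1) * (n.factorial : ℂ) := by
        push_cast [Nat.factorial_succ]; ring
      have hfacne : ((n : ℂ) + 1) ≠ 0 := by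
        exact_mod_cast Nat.cast_add_one_ne_zero (R := ℂ) n
      have hfne : (n.factorial : ℂ) ≠ 0 := Nat.cast_ne_zero.mpr n.factorial_ne_zero
      simp only [hqdef, hgdef]
      push_cast
      rw [hfac]
      field_simp
      linear_combination (z * z ^ n) * mul_inv_cancel₀ hn
    have := (hasSum_nat_add_iff (f := q) 1).mp hshift
    simpa [hqdef] using this
  have hexp : HasSum (fun x : ℕ => z ^ x / (x.factorial : ℂ)) (Complex.exp z) := by
    have := NormedSpace.expSeries_div_hasSum_exp z
    rwa [← Complex.exp_eq_exp_ℂ] at this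
  have htot : HasSum (fun x => (t + 1) * h x) (Complex.exp z + z * ∑' x, g x) := by
    have := hexp.add hq
    convert this using 2 with x
    have hx : t + 1 - (x : ℂ) ≠ 0 := sub_ne_zero.mpr (ht1 x)
    have hfne : (x.factorial : ℂ) ≠ 0 := Nat.cast_ne_zero.mpr x.factorial_ne_zero
    simp only [hhdef, hqdef]
    field_simp
    ring
  have hmul : (t + 1) * (∑' x, h x) = Complex.exp z + z * ∑' x, g x := by
    rw [← htot.tsum_eq, tsum_mul_left]
  rw [hmul]
  ring
end

section
/- Let a ∈ ℂ, let z ∈ ℂ with ‖z‖ < 1, and let t ∈ ℂ satisfy t ≠ x and t + 1 ≠ x for every x ∈ ℕ. Then the Stieltjes transform S(t) = ∑_{x=0}^∞ (a)_x·(z^x/x!)·1/(t − x) of the Meixner weight satisfies (t + 1)·S(t + 1) − z·(t + a)·S(t) = (1 − z)·(1 − z)^{−a}, where (1 − z)^{−a} denotes the principal branch of the complex power. -/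
open Finset

open Filter

lemma poch_succ (a : ℂ) (n : ℕ) : poch a (n+1) = poch a n * (a + n) := prod_range_succ _ _

lemma master (a : ℂ) (r : ℝ) (h0 : 0 < r) (h1 : r < 1) :
    Summable (fun n : ℕ => ‖poch a n‖ / n.factorial * (n + 1) * r ^ n) := by
  set f : ℕ → ℝ := fun n => ‖poch a n‖ / n.factorial * (n + 1) * r ^ n with hf
  set q : ℕ → ℝ := fun n => r * ‖(a + n) / ((n : ℂ) + 1)‖ * (((n : ℝ) + 2) / ((n : ℝ) + 1)) with hq
  have hfq : ∀ n, f (n + 1) = f n * q n := by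
    intro n
    have hfac : ((n+1).factorial : ℝ) = (n+1) * n.factorial := by
      push_cast [Nat.factorial_succ]; ring
    have hnc : ‖((n : ℂ) + 1)‖ = (n : ℝ) + 1 := by
      rw [show ((n : ℂ) + 1) = ((n + 1 : ℕ) : ℂ) by push_cast; ring, Complex.norm_natCast]
      push_cast; ring
    have hne : (n : ℝ) + 1 ≠ 0 := by positivity
    have hfacne : (n.factorial : ℝ) ≠ 0 := by positivity
    simp only [hf, hq, poch_succ, norm_mul, norm_div, hnc, hfac]
    push_cast
    field_simp
    ring
  have hqt : Tendsto q atTop (nhds r) := by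
    have h1 : Tendsto (fun n : ℕ => (a + n) / ((n : ℂ) + 1)) atTop (nhds 1) := by
      have he : ∀ n : ℕ, (a + n) / ((n : ℂ) + 1) = 1 + (a - 1) * (1 / ((n : ℂ) + 1)) := by
        intro n
        have : ((n : ℂ) + 1) ≠ 0 := by
          exact_mod_cast (Nat.cast_add_one_ne_zero (R := ℂ) n)
        field_simp
        ring
      simp only [he]
      have h0 : Tendsto (fun n : ℕ => (1 : ℂ) / ((n : ℂ) + 1)) atTop (nhds 0) := by
        rw [tendsto_zero_iff_norm_tendsto_zero]
        have : (fun n : ℕ => ‖(1:ℂ) / ((n:ℂ)+1)‖) = fun n : ℕ => 1 / ((n:ℝ)+1) := by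
          funext n
          rw [norm_div, norm_one, show ((n : ℂ) + 1) = ((n + 1 : ℕ) : ℂ) by push_cast; ring,
            Complex.norm_natCast]
          push_cast; ring
        rw [this]
        exact tendsto_one_div_add_atTop_nhds_zero_nat
      have := (h0.const_mul (a - 1)).const_add (1 : ℂ)
      simpa using this
    have h1' : Tendsto (fun n : ℕ => ‖(a + n) / ((n : ℂ) + 1)‖) atTop (nhds 1) := by
      have := h1.norm
      simpa using this
    have h2 : Tendsto (fun n : ℕ => ((n : ℝ) + 2) / ((n : ℝ) + 1)) atTop (nhds 1) := by
      have he : ∀ n : ℕ, ((n : ℝ) + 2) / ((n : ℝ) + 1) = 1 + 1 / ((n : ℝ) + 1) := by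
        intro n
        have : (n : ℝ) + 1 ≠ 0 := by positivity
        field_simp
        ring
      simp only [he]
      have := tendsto_one_div_add_atTop_nhds_zero_nat.const_add (1 : ℝ)
      simpa using this
    have := (h1'.const_mul r).mul h2
    simpa [hq] using this
  apply summable_of_ratio_norm_eventually_le (r := (1 + r) / 2) (by linarith)
  have hev : ∀ᶠ n in atTop, q n < (1 + r) / 2 := hqt.eventually_lt_const (by linarith)
  filter_upwards [hev] with n hn
  have hfn : 0 ≤ f n := by positivity
  rw [Real.norm_of_nonneg (by positivity), Real.norm_of_nonneg hfn, hfq n]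
  calc f n * q n ≤ f n * ((1+r)/2) := mul_le_mul_of_nonneg_left hn.le hfn
    _ = (1+r)/2 * f n := by ring

lemma binomial (a z : ℂ) (hz : ‖z‖ < 1) :
    HasSum (fun n : ℕ => poch a n * (z ^ n / n.factorial)) ((1 - z) ^ (-a)) := by
  set r : ℝ := (1 + ‖z‖) / 2 with hrdef
  have hr0 : 0 < r := by positivity
  have hr1 : r < 1 := by rw [hrdef]; linarith
  have hzr : ‖z‖ < r := by rw [hrdef]; linarith [norm_nonneg z]
  set s : Set ℂ := Metric.ball (0 : ℂ) r with hsdef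
  have hmem : ∀ y ∈ s, ‖y‖ < r := by
    intro y hy; rw [hsdef, Metric.mem_ball, dist_zero_right] at hy; exact hy
  have h0s : (0 : ℂ) ∈ s := by rw [hsdef, Metric.mem_ball, dist_zero_right]; simpa using hr0
  have hzs : z ∈ s := by rw [hsdef, Metric.mem_ball, dist_zero_right]; exact hzr
  set g : ℕ → ℂ → ℂ := fun n y => poch a n * y ^ n / n.factorial with hgdef
  set g' : ℕ → ℂ → ℂ := fun n y => poch a n * ((n : ℂ) * y ^ (n - 1)) / n.factorial with hg'def
  have hg : ∀ n y, HasDerivAt (g n) (g' n y) y := fun n y =>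
    (((hasDerivAt_pow n y).const_mul (poch a n)).div_const _)
  set u : ℕ → ℝ := fun n => ‖poch a n‖ / n.factorial * (n + 1) * r ^ n / r with hudef
  have hu : Summable u := (master a r hr0 hr1).div_const r
  have hg' : ∀ n y, y ∈ s → ‖g' n y‖ ≤ u n := by
    intro n y hy
    have hyr := hmem y hy
    have hn : ‖g' n y‖ = ‖poch a n‖ * ((n : ℝ) * ‖y‖ ^ (n - 1)) / n.factorial := by
      simp [hg'def, norm_mul, norm_div, norm_pow, Complex.norm_natCast]
    rw [hn]
    match n with
    | 0 => simp [hudef]; positivity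
    | m + 1 =>
      have h1 : ‖y‖ ^ m ≤ r ^ m := pow_le_pow_left₀ (norm_nonneg y) hyr.le m
      have h2 : ((m + 1 : ℕ) : ℝ) ≤ (m : ℝ) + 2 := by push_cast; linarith
      have hu' : u (m+1) = ‖poch a (m+1)‖ / (m+1).factorial * ((m : ℝ) + 2) * r ^ m := by
        rw [hudef]
        have : r ^ (m + 1) = r ^ m * r := pow_succ r m
        push_cast
        field_simp
        ring
      rw [hu']
      have hfp : (0:ℝ) < ((m+1).factorial : ℝ) := by positivity
      rw [div_le_iff₀ hfp] at *
      calc ‖poch a (m+1)‖ * (((m+1:ℕ) : ℝ) * ‖y‖ ^ (m + 1 - 1))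
          ≤ ‖poch a (m+1)‖ * (((m:ℝ) + 2) * r ^ m) := by
            apply mul_le_mul_of_nonneg_left _ (norm_nonneg _)
            simpa using mul_le_mul h2 h1 (by positivity) (by positivity)
        _ = ‖poch a (m+1)‖ / (m+1).factorial * ((m : ℝ) + 2) * r ^ m * (m+1).factorial := by
            field_simp
  have hg0 : Summable fun n => g n 0 := by
    apply summable_of_ne_finset_zero (s := {0})
    intro n hn
    have : n ≠ 0 := by simpa using hn
    simp [hgdef, zero_pow this]
  have hop : IsOpen s := Metric.isOpen_ball
  have hpc : IsPreconnected s := (convex_ball (0:ℂ) r).isPreconnected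
  set F : ℂ → ℂ := fun y => ∑' n, g n y with hFdef
  have hFderiv : ∀ y ∈ s, HasDerivAt F (∑' n, g' n y) y := fun y hy =>
    hasDerivAt_tsum_of_isPreconnected hu hop hpc (fun n y _ => hg n y) (fun n y hy => hg' n y hy) h0s hg0 hy
  have hFsum : ∀ y ∈ s, Summable fun n => g n y := fun y hy =>
    summable_of_summable_hasDerivAt_of_isPreconnected hu hop hpc (fun n y _ => hg n y)
      (fun n y hy => hg' n y hy) h0s hg0 hy
  -- the ODE : (1 - y) * D = a * F y
  have hODE : ∀ y ∈ s, (1 - y) * (∑' n, g' n y) = a * F y := by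
    intro y hy
    set D : ℂ := ∑' n, g' n y with hDdef
    have hDsum : Summable fun n => g' n y :=
      Summable.of_norm_bounded hu (fun n => hg' n y hy)
    have hD : HasSum (fun n => g' n y) D := hDsum.hasSum
    have h1 : HasSum (fun n => g' (n+1) y) (D - ∑ i ∈ range 1, g' i y) :=
      (hasSum_nat_add_iff' 1).mpr hD
    have h1' : HasSum (fun n => g' (n+1) y) D := by
      simpa [hg'def] using h1
    have haF : HasSum (fun n => a * g n y) (a * F y) := (hFsum y hy).hasSum.mul_left a
    have hyD : HasSum (fun n => y * g' n y) (y * D) := hD.mul_left y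
    have hkey : (fun n => a * g n y + y * g' n y) = fun n => g' (n+1) y := by
      funext n
      have hstep : y * g' n y = (n : ℂ) * g n y := by
        match n with
        | 0 => simp [hg'def, hgdef]
        | m + 1 =>
          simp only [hg'def, hgdef, Nat.add_sub_cancel]
          rw [pow_succ]
          push_cast
          ring
      rw [hstep]
      have hfne : ((n.factorial : ℂ)) ≠ 0 := Nat.cast_ne_zero.mpr n.factorial_ne_zero
      have hne2 : ((n:ℂ)+1) ≠ 0 := Nat.cast_add_one_ne_zero n
      have hfac2 : (((n+1).factorial : ℂ)) = ((n:ℂ)+1) * n.factorial := by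
        push_cast [Nat.factorial_succ]; ring
      simp only [hg'def, hgdef, Nat.add_sub_cancel, poch_succ, hfac2]
      push_cast
      field_simp
    have h2 : HasSum (fun n => g' (n+1) y) (a * F y + y * D) := by
      rw [← hkey]; exact haF.add hyD
    have : D = a * F y + y * D := h1'.unique h2
    linear_combination this
  -- G is locally constant
  set G : ℂ → ℂ := fun y => F y * (1 - y) ^ a with hGdef
  have hGderiv : ∀ y ∈ s, HasDerivAt G 0 y := by
    intro y hy
    have hyr := hmem y hy
    have hre : 0 < (1 - y).re := by
      have : |y.re| ≤ ‖y‖ := Complex.abs_re_le_norm y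
      simp only [Complex.sub_re, Complex.one_re]
      have := abs_le.mp this
      linarith
    have hne : (1 : ℂ) - y ≠ 0 := by
      intro h; rw [h] at hre; simp at hre
    have hc : HasDerivAt (fun w => (1 - w) ^ a) (a * (1 - y) ^ (a - 1) * (-1)) y := by
      exact HasDerivAt.cpow_const ((hasDerivAt_id y).const_sub 1) (Or.inl hre)
    have hd := (hFderiv y hy).mul hc
    have hval : (∑' n, g' n y) * (1 - y) ^ a + F y * (a * (1 - y) ^ (a-1) * (-1)) = 0 := by
      have hsplit : (1 - y) ^ a = (1 - y) ^ (a - 1) * (1 - y) := by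
        conv_lhs => rw [show a = (a - 1) + 1 by ring]
        rw [Complex.cpow_add _ _ hne, Complex.cpow_one]
      rw [hsplit]
      have := hODE y hy
      linear_combination (1 - y) ^ (a - 1) * this
    rw [hval] at hd
    exact hd
  have hconst : G z = G 0 := by
    apply (convex_ball (0:ℂ) r).is_const_of_fderivWithin_eq_zero (𝕜 := ℂ)
      (fun y hy => ((hGderiv y hy).differentiableAt).differentiableWithinAt) _ hzs h0s
    intro y hy
    rw [fderivWithin_of_isOpen hop hy]
    have := (hGderiv y hy).hasFDerivAt.fderiv
    rw [this]
    ext w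
    simp
  have hF0 : F 0 = 1 := by
    have h00 : F 0 = ∑' n, g n 0 := rfl
    rw [h00, tsum_eq_single 0]
    · simp [hgdef, poch]
    · intro n hn; simp [hgdef, zero_pow hn]
  have hG0 : G 0 = 1 := by simp [hGdef, hF0, Complex.one_cpow]
  have hne : (1 : ℂ) - z ≠ 0 := by
    intro h
    have : ‖(1:ℂ)‖ = ‖z‖ := by rw [show (1:ℂ) = z from by linear_combination h]
    simp at this; rw [this] at hz; exact absurd hz (lt_irrefl _)
  have hfz : F z = (1 - z) ^ (-a) := by
    have h1 : F z * (1 - z) ^ a = 1 := by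
      have h2 := hconst
      rw [hG0] at h2
      exact h2
    have hcne : (1 - z) ^ a ≠ 0 := by
      intro h; rw [h, mul_zero] at h1; exact one_ne_zero h1.symm
    rw [Complex.cpow_neg]
    field_simp [hcne]
    linear_combination h1
  have hFz : HasSum (fun n => g n z) (F z) := (hFsum z hzs).hasSum
  rw [hfz] at hFz
  have heq : (fun n : ℕ => poch a n * (z ^ n / (n.factorial : ℂ))) = fun n => g n z := by
    funext n; rw [hgdef]; ring
  rw [heq]
  exact hFz

lemma summable_mul_bdd (c : ℕ → ℂ) (hc : Summable c) (w : ℕ → ℂ) (C : ℝ)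
    (hw : ∀ᶠ x : ℕ in atTop, ‖w x‖ ≤ C) : Summable fun x => c x * w x := by
  have hc' : Summable fun x => ‖c x‖ := summable_norm_iff.mpr hc
  apply Summable.of_norm_bounded_eventually_nat (hc'.mul_right C)
  filter_upwards [hw] with x hx
  rw [norm_mul]
  exact mul_le_mul_of_nonneg_left hx (norm_nonneg _)

/-- the Stieltjes transform `S(t) = ∑_{x≥0} (a)_x (z^x/x!)/(t-x)` of the
Meixner weight satisfies `(t+1) S(t+1) - z (t+a) S(t) = (1-z)(1-z)^{-a}` (principal branch). -/
theorem meixner_stieltjes (a z : ℂ) (hz : ‖z‖ < 1) (t : ℂ)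
    (ht : ∀ x : ℕ, t ≠ (x : ℂ)) (ht1 : ∀ x : ℕ, t + 1 ≠ (x : ℂ)) :
    (t + 1) * (∑' x : ℕ, poch a x * (z ^ x / (x.factorial : ℂ)) * (1 / (t + 1 - (x : ℂ))))
      - z * (t + a) * (∑' x : ℕ, poch a x * (z ^ x / (x.factorial : ℂ)) * (1 / (t - (x : ℂ))))
      = (1 - z) * (1 - z) ^ (-a) := by
  set c : ℕ → ℂ := fun x => poch a x * (z ^ x / (x.factorial : ℂ)) with hcdef
  set A : ℂ := (1 - z) ^ (-a) with hAdef
  have hA : HasSum c A := binomial a z hz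
  have hc : Summable c := hA.summable
  have hden0 : ∀ x : ℕ, t - (x : ℂ) ≠ 0 := fun x => sub_ne_zero.mpr (ht x)
  have hden1 : ∀ x : ℕ, t + 1 - (x : ℂ) ≠ 0 := fun x => sub_ne_zero.mpr (ht1 x)
  -- eventual lower bound on denominators
  have hlow : ∀ s : ℂ, ∀ᶠ x : ℕ in atTop, (x : ℝ) - ‖s‖ ≤ ‖s - (x : ℂ)‖ := by
    intro s
    filter_upwards with x
    calc (x : ℝ) - ‖s‖ = ‖(x : ℂ)‖ - ‖s‖ := by rw [Complex.norm_natCast]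
      _ ≤ ‖(x : ℂ) - s‖ := norm_sub_norm_le _ _
      _ = ‖s - (x : ℂ)‖ := norm_sub_rev _ _
  have hbdd : ∀ s : ℂ, ∀ᶠ x : ℕ in atTop, ‖1 / (s - (x : ℂ))‖ ≤ 1 := by
    intro s
    have hev : ∀ᶠ x : ℕ in atTop, (‖s‖ + 1 : ℝ) ≤ x :=
      tendsto_natCast_atTop_atTop.eventually_ge_atTop _
    filter_upwards [hev, hlow s] with x hx hlx
    have h1 : (1 : ℝ) ≤ ‖s - (x : ℂ)‖ := by linarith
    rw [norm_div, norm_one]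
    rw [div_le_one (by linarith)]
    exact h1
  have hS1 : Summable fun x : ℕ => c x * (1 / (t + 1 - (x : ℂ))) :=
    summable_mul_bdd c hc _ 1 (hbdd (t + 1))
  have hS0 : Summable fun x : ℕ => c x * (1 / (t - (x : ℂ))) :=
    summable_mul_bdd c hc _ 1 (hbdd t)
  set h : ℕ → ℂ := fun x => c x * ((x : ℂ) / (t + 1 - (x : ℂ))) with hhdef
  have hh : Summable h := by
    apply summable_mul_bdd c hc _ 2
    have hev : ∀ᶠ x : ℕ in atTop, (2 * ‖t + 1‖ + 2 : ℝ) ≤ x :=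
      tendsto_natCast_atTop_atTop.eventually_ge_atTop _
    filter_upwards [hev, hlow (t + 1)] with x hx hlx
    have hpos : (0 : ℝ) < ‖t + 1 - (x : ℂ)‖ := by linarith
    rw [norm_div, Complex.norm_natCast, div_le_iff₀ hpos]
    linarith
  have hh' : Summable fun x => h (x + 1) := (summable_nat_add_iff 1).mpr hh
  have hH : ∑' x, h x = h 0 + ∑' x, h (x + 1) := Summable.tsum_eq_zero_add hh
  have hh0 : h 0 = 0 := by simp [hhdef]
  -- pointwise identity
  have hrec : ∀ x : ℕ, ((x : ℂ) + 1) * c (x + 1) = z * (a + x) * c x := by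
    intro x
    have hfne : ((x.factorial : ℂ)) ≠ 0 := Nat.cast_ne_zero.mpr x.factorial_ne_zero
    have hfac : (((x+1).factorial : ℂ)) = ((x:ℂ)+1) * x.factorial := by
      push_cast [Nat.factorial_succ]; ring
    simp only [hcdef, poch_succ, hfac, pow_succ]
    push_cast
    have hne2 : ((x:ℂ)+1) ≠ 0 := Nat.cast_add_one_ne_zero x
    field_simp
  have hident : ∀ x : ℕ,
      (t + 1) * (c x * (1 / (t + 1 - (x : ℂ)))) - z * (t + a) * (c x * (1 / (t - (x : ℂ))))
        = (1 - z) * c x + (h x - h (x + 1)) := by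
    intro x
    have hne2 : ((x:ℂ)+1) ≠ 0 := Nat.cast_add_one_ne_zero x
    have h0 := hden0 x
    have h1 := hden1 x
    have hx1 : h (x + 1) = z * (a + x) * c x * (1 / (t - (x : ℂ))) := by
      have e0 : t + 1 - (((x:ℂ)) + 1) = t - x := by ring
      have e1 : h (x + 1) = ((x:ℂ) + 1) * c (x + 1) * (1 / (t - (x : ℂ))) := by
        simp only [hhdef]
        push_cast
        rw [e0]
        ring
      rw [e1, hrec x]
    rw [hx1]
    simp only [hhdef]
    field_simp
    ring
  -- assemble
  have hleft : HasSum
      (fun x : ℕ => (t + 1) * (c x * (1 / (t + 1 - (x : ℂ))))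
        - z * (t + a) * (c x * (1 / (t - (x : ℂ)))))
      ((t + 1) * (∑' x : ℕ, c x * (1 / (t + 1 - (x : ℂ))))
        - z * (t + a) * (∑' x : ℕ, c x * (1 / (t - (x : ℂ))))) :=
    (hS1.hasSum.mul_left (t + 1)).sub (hS0.hasSum.mul_left (z * (t + a)))
  have hright : HasSum (fun x : ℕ => (1 - z) * c x + (h x - h (x + 1)))
      ((1 - z) * A + ((∑' x, h x) - ∑' x, h (x + 1))) :=
    (hA.mul_left (1 - z)).add (hh.hasSum.sub hh'.hasSum)
  have hzero : (∑' x, h x) - (∑' x, h (x + 1)) = 0 := by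
    rw [hH, hh0]; ring
  rw [hzero, add_zero] at hright
  have := hleft.unique (by rw [funext hident]; exact hright)
  calc (t + 1) * (∑' x : ℕ, c x * (1 / (t + 1 - (x : ℂ))))
      - z * (t + a) * (∑' x : ℕ, c x * (1 / (t - (x : ℂ)))) = (1 - z) * A := this
    _ = (1 - z) * (1 - z) ^ (-a) := by rw [hAdef]
end

section
/- Let N, n ∈ ℕ with n ≤ N and let z ∈ ℂ. Then the n-th Krawtchouk moment satisfies ∑_{x=0}^N φ_n(x)·(−N)_x·z^x/x! = z^n·(−N)_n·(1 − z)^{N−n}, where (−N)_x = ∏_{j=0}^{x-1}(−N + j) and (1 − z)^{N−n} is an ordinary natural-number power. -/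
open Finset

lemma fallFac_nat_eq (n x : ℕ) (h : n ≤ x) :
    fallFac n (x : ℂ) = (x.descFactorial n : ℂ) := by
  rw [fallFac, Nat.descFactorial_eq_prod_range, Nat.cast_prod]
  refine Finset.prod_congr rfl fun j hj => ?_
  rw [Nat.cast_sub (le_trans (Nat.le_of_lt_succ (Nat.lt_succ_of_lt (Finset.mem_range.mp hj))) h)]

lemma fallFac_nat_zero (n x : ℕ) (h : x < n) : fallFac n (x : ℂ) = 0 :=
  Finset.prod_eq_zero (Finset.mem_range.mpr h) (by simp)

lemma poch_neg_nat (N x : ℕ) (h : x ≤ N) :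
    poch (-(N : ℂ)) x = (-1) ^ x * (N.descFactorial x : ℂ) := by
  rw [poch, Nat.descFactorial_eq_prod_range, Nat.cast_prod]
  rw [show (∏ j ∈ Finset.range x, (-(N : ℂ) + (j : ℂ)))
      = ∏ j ∈ Finset.range x, (-1 : ℂ) * ((N : ℂ) - (j : ℂ)) from
    Finset.prod_congr rfl fun j _ => by ring]
  rw [Finset.prod_mul_distrib, Finset.prod_const]
  rw [Finset.card_range]
  refine congrArg (fun t => (-1 : ℂ) ^ x * t) ?_
  refine Finset.prod_congr rfl fun j hj => ?_
  rw [Nat.cast_sub (le_trans (le_of_lt (Finset.mem_range.mp hj)) h)]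

/-- the `n`-th Krawtchouk moment:
`∑_{x=0}^N φ_n(x) (-N)_x z^x/x! = z^n (-N)_n (1-z)^{N-n}`. -/
theorem krawtchouk_moment (N n : ℕ) (hn : n ≤ N) (z : ℂ) :
    (∑ x ∈ Finset.range (N + 1),
        fallFac n (x : ℂ) * poch (-(N : ℂ)) x * z ^ x / (x.factorial : ℂ))
      = z ^ n * poch (-(N : ℂ)) n * (1 - z) ^ (N - n) := by
  rw [Finset.range_eq_Ico, ← Finset.sum_Ico_consecutive _ (Nat.zero_le n)
    (by omega : n ≤ N + 1)]
  have h0 : (∑ x ∈ Finset.Ico 0 n,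
      fallFac n (x : ℂ) * poch (-(N : ℂ)) x * z ^ x / (x.factorial : ℂ)) = 0 := by
    refine Finset.sum_eq_zero fun x hx => ?_
    rw [fallFac_nat_zero n x (Finset.mem_Ico.mp hx).2]
    simp
  rw [h0, zero_add, Finset.sum_Ico_eq_sum_range]
  have hrange : N + 1 - n = (N - n) + 1 := by omega
  rw [hrange]
  -- binomial expansion of (1 - z)^(N-n)
  have hbin : (1 - z) ^ (N - n)
      = ∑ k ∈ Finset.range ((N - n) + 1),
          (-z) ^ k * ((N - n).choose k : ℂ) := by
    have := add_pow (-z) 1 (N - n)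
    simp only [one_pow, mul_one] at this
    rw [show (1 : ℂ) - z = -z + 1 by ring, this]
  rw [hbin, Finset.mul_sum, poch_neg_nat N n hn]
  refine Finset.sum_congr rfl fun k hk => ?_
  have hk' : k ≤ N - n := Nat.lt_succ_iff.mp (Finset.mem_range.mp hk)
  have hnk : n + k ≤ N := by omega
  rw [fallFac_nat_eq n (n + k) (Nat.le_add_right n k), poch_neg_nat N (n + k) hnk]
  -- factorial facts over ℂ
  have fk : (k.factorial : ℂ) ≠ 0 := Nat.cast_ne_zero.mpr (Nat.factorial_ne_zero k)
  have fnk : ((n + k).factorial : ℂ) ≠ 0 := Nat.cast_ne_zero.mpr (Nat.factorial_ne_zero _)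
  have fNn : ((N - n).factorial : ℂ) ≠ 0 := Nat.cast_ne_zero.mpr (Nat.factorial_ne_zero _)
  have fNnk : ((N - n - k).factorial : ℂ) ≠ 0 := Nat.cast_ne_zero.mpr (Nat.factorial_ne_zero _)
  have h1 : ((n + k).descFactorial n : ℂ) = ((n + k).factorial : ℂ) / (k.factorial : ℂ) := by
    have := Nat.factorial_mul_descFactorial (Nat.le_add_right n k)
    rw [show n + k - n = k by omega] at this
    field_simp
    exact_mod_cast (mul_comm ((n+k).descFactorial n) (k.factorial)) ▸ congrArg (Nat.cast (R := ℂ)) this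
  have h2 : (N.descFactorial (n + k) : ℂ) = (N.factorial : ℂ) / ((N - n - k).factorial : ℂ) := by
    have := Nat.factorial_mul_descFactorial hnk
    rw [show N - (n + k) = N - n - k by omega] at this
    field_simp
    exact_mod_cast (mul_comm (N.descFactorial (n+k)) ((N-n-k).factorial)) ▸ congrArg (Nat.cast (R := ℂ)) this
  have h3 : (N.descFactorial n : ℂ) = (N.factorial : ℂ) / ((N - n).factorial : ℂ) := by
    have := Nat.factorial_mul_descFactorial hn
    field_simp
    exact_mod_cast (mul_comm (N.descFactorial n) ((N-n).factorial)) ▸ congrArg (Nat.cast (R := ℂ)) this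
  have h4 : (((N - n).choose k : ℕ) : ℂ)
      = ((N - n).factorial : ℂ) / ((k.factorial : ℂ) * ((N - n - k).factorial : ℂ)) := by
    have := Nat.choose_mul_factorial_mul_factorial hk'
    field_simp
    exact_mod_cast this
  rw [h1, h2, h3, h4]
  have hs : ((-1 : ℂ)) ^ (n + k) = (-1) ^ n * (-1) ^ k := pow_add _ _ _
  have hz : z ^ (n + k) = z ^ n * z ^ k := pow_add _ _ _
  rw [hs, hz]
  rw [neg_pow z k]
  field_simp
end

section
/- Let m, n ∈ ℕ with n ≤ 2m. Then the n-th moment of the symmetrized Charlier weight satisfies ∑_{x=0}^{2m} φ_n(x)·(−2m)_x·(−1)^x/x! = (−1)^n·(−2m)_n·2^{2m−n}. -/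
open Finset

lemma prod_sub_cast (N x : ℕ) :
    (∏ j ∈ Finset.range x, ((N : ℂ) - (j : ℂ))) = (N.descFactorial x : ℂ) := by
  induction x with
  | zero => simp
  | succ x ih =>
    rw [Finset.prod_range_succ, ih, Nat.descFactorial_succ, Nat.cast_mul]
    rcases le_or_gt x N with h | h
    · rw [Nat.cast_sub h]; ring
    · rw [Nat.descFactorial_eq_zero_iff_lt.2 h]
      simp

lemma poch_neg_cast (N x : ℕ) :
    poch (-(N : ℂ)) x * (-1 : ℂ) ^ x = (N.descFactorial x : ℂ) := by
  have : poch (-(N : ℂ)) x = (-1 : ℂ) ^ x * ∏ j ∈ Finset.range x, ((N : ℂ) - (j : ℂ)) := by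
    calc poch (-(N : ℂ)) x = ∏ j ∈ Finset.range x, ((-1 : ℂ) * ((N : ℂ) - (j : ℂ))) :=
          Finset.prod_congr rfl fun j _ => by ring
      _ = (-1 : ℂ) ^ x * ∏ j ∈ Finset.range x, ((N : ℂ) - (j : ℂ)) := by
          rw [Finset.prod_mul_distrib, Finset.prod_const, Finset.card_range]
  rw [this, prod_sub_cast, mul_comm, ← mul_assoc, ← pow_add, ← two_mul, pow_mul,
    neg_one_sq, one_pow, one_mul]

lemma fallFac_cast (n x : ℕ) : fallFac n (x : ℂ) = (x.descFactorial n : ℂ) := by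
  rw [fallFac, prod_sub_cast]

lemma key_nat (m n x : ℕ) (hnx : n ≤ x) (hx : x ≤ m) :
    x.descFactorial n * m.descFactorial x
      = x.factorial * (m.descFactorial n * (m - n).choose (x - n)) := by
  rw [Nat.descFactorial_eq_factorial_mul_choose, Nat.descFactorial_eq_factorial_mul_choose,
    Nat.descFactorial_eq_factorial_mul_choose]
  have h := Nat.choose_mul (n := m) hnx
  calc n.factorial * x.choose n * (x.factorial * m.choose x)
      = (m.choose x * x.choose n) * (n.factorial * x.factorial) := by ring
    _ = (m.choose n * (m - n).choose (x - n)) * (n.factorial * x.factorial) := by rw [h]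
    _ = x.factorial * (n.factorial * m.choose n * (m - n).choose (x - n)) := by ring

/-- the `n`-th moment of the symmetrized Charlier weight:
`∑_{x=0}^{2m} φ_n(x) (-2m)_x (-1)^x/x! = (-1)^n (-2m)_n 2^{2m-n}`. -/
theorem symmetrized_charlier_moment (m n : ℕ) (hn : n ≤ 2 * m) :
    (∑ x ∈ Finset.range (2 * m + 1),
        fallFac n (x : ℂ) * poch (-(2 * m : ℂ)) x * (-1 : ℂ) ^ x / (x.factorial : ℂ))
      = (-1 : ℂ) ^ n * poch (-(2 * m : ℂ)) n * 2 ^ (2 * m - n) := by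
  have hcast : (-(2 * m : ℂ)) = (-((2 * m : ℕ) : ℂ)) := by push_cast; ring
  have hterm : ∀ x ∈ Finset.range (2 * m + 1),
      fallFac n (x : ℂ) * poch (-(2 * m : ℂ)) x * (-1 : ℂ) ^ x / (x.factorial : ℂ)
        = if n ≤ x then (((2 * m).descFactorial n * (2 * m - n).choose (x - n) : ℕ) : ℂ)
          else 0 := by
    intro x hx
    rw [Finset.mem_range] at hx
    have hxm : x ≤ 2 * m := Nat.lt_succ_iff.mp hx
    rw [mul_assoc, hcast, poch_neg_cast, fallFac_cast]
    by_cases hnx : n ≤ x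
    · rw [if_pos hnx, ← Nat.cast_mul, key_nat (2 * m) n x hnx hxm, Nat.cast_mul,
        mul_comm, mul_div_assoc, div_self (Nat.cast_ne_zero.mpr x.factorial_ne_zero), mul_one]
    · rw [if_neg hnx]
      rw [Nat.descFactorial_eq_zero_iff_lt.2 (lt_of_not_ge hnx)]
      simp
  rw [Finset.sum_congr rfl hterm, Finset.sum_ite, Finset.sum_const_zero, add_zero]
  have hfilter : Finset.filter (fun x => n ≤ x) (Finset.range (2 * m + 1))
      = Finset.Ico n (2 * m + 1) := by
    ext x; simp [Finset.mem_filter, Finset.mem_Ico, and_comm]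
  rw [hfilter]
  have hRHS : (-1 : ℂ) ^ n * poch (-(2 * m : ℂ)) n = (((2 * m).descFactorial n : ℕ) : ℂ) := by
    rw [hcast, mul_comm, poch_neg_cast]
  rw [hRHS]
  rw [show Finset.Ico n (2 * m + 1) = Finset.map ⟨fun k => k + n, add_left_injective n⟩
      (Finset.range (2 * m + 1 - n)) from ?_]
  · rw [Finset.sum_map]
    simp only [Function.Embedding.coeFn_mk, Nat.add_sub_cancel]
    rw [← Nat.cast_sum, ← Finset.mul_sum, show 2 * m + 1 - n = (2 * m - n) + 1 by omega,
      Nat.sum_range_choose]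
    push_cast
    ring
  · ext x
    simp only [Finset.mem_Ico, Finset.mem_map, Finset.mem_range, Function.Embedding.coeFn_mk]
    constructor
    · rintro ⟨h1, h2⟩; exact ⟨x - n, by omega, by omega⟩
    · rintro ⟨k, hk, rfl⟩; omega
end

section
/- Let b, z ∈ ℂ with b + 1 + k ≠ 0 for every k ∈ ℕ, and let t ∈ ℂ satisfy t ≠ x and t + 1 ≠ x for every x ∈ ℕ. Let ρ(x) = z^x/((b + 1)_x·x!) be the generalized Charlier weight, and set ν₀ = ∑_{x=0}^∞ ρ(x) and ν₁ = ∑_{x=0}^∞ x·ρ(x). Then the Stieltjes transform S(t) = ∑_{x=0}^∞ ρ(x)/(t − x) satisfies (t + 1)·(t + b + 1)·S(t + 1) − z·S(t) = (t + b + 1)·ν₀ + ν₁. -/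
open Finset Filter

noncomputable def gcRho (b z : ℂ) (x : ℕ) : ℂ := z ^ x / (poch (b + 1) x * (x.factorial : ℂ))

lemma poch_ne_zero (b : ℂ) (hb : ∀ k : ℕ, b + 1 + (k : ℂ) ≠ 0) (n : ℕ) :
    poch (b + 1) n ≠ 0 :=
  Finset.prod_ne_zero_iff.2 fun j _ => hb j

lemma gcRho_succ (b z : ℂ) (hb : ∀ k : ℕ, b + 1 + (k : ℂ) ≠ 0) (n : ℕ) :
    gcRho b z (n + 1) = gcRho b z n * (z / ((b + 1 + n) * (n + 1))) := by
  have h1 : poch (b + 1) (n + 1) = poch (b + 1) n * (b + 1 + n) := Finset.prod_range_succ _ _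
  have h2 : ((n + 1).factorial : ℂ) = (n.factorial : ℂ) * (n + 1) := by
    push_cast [Nat.factorial_succ]; ring
  have hp := poch_ne_zero b hb n
  have hf : (n.factorial : ℂ) ≠ 0 := Nat.cast_ne_zero.2 n.factorial_ne_zero
  have hn1 : ((n : ℂ) + 1) ≠ 0 := by
    have : ((n : ℂ) + 1) = ((n + 1 : ℕ) : ℂ) := by push_cast; ring
    rw [this]
    exact Nat.cast_ne_zero.2 (Nat.succ_ne_zero n)
  simp only [gcRho, h1, h2]
  field_simp
  ring

lemma norm_gcRho_succ (b z : ℂ) (hb : ∀ k : ℕ, b + 1 + (k : ℂ) ≠ 0) (n : ℕ) :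
    ‖gcRho b z (n + 1)‖ = ‖gcRho b z n‖ * (‖z‖ / (‖b + 1 + (n : ℂ)‖ * ((n : ℝ) + 1))) := by
  rw [gcRho_succ b z hb n, norm_mul, norm_div, norm_mul]
  congr 2
  have : ((n : ℂ) + 1) = ((n + 1 : ℕ) : ℂ) := by push_cast; ring
  rw [this, Complex.norm_natCast]
  push_cast; ring

lemma summable_mul_gcRho (b z : ℂ) (hb : ∀ k : ℕ, b + 1 + (k : ℂ) ≠ 0)
    (w : ℕ → ℂ) (C : ℝ)
    (hw : ∀ᶠ n in atTop, ‖w (n + 1)‖ ≤ C * ‖w n‖) :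
    Summable (fun n => w n * gcRho b z n) := by
  apply summable_of_ratio_norm_eventually_le (r := 1/2) (by norm_num)
  have hD : Tendsto (fun n : ℕ => ‖b + 1 + (n : ℂ)‖ * ((n : ℝ) + 1)) atTop atTop := by
    apply Filter.tendsto_atTop_mono' _ (f₁ := fun n : ℕ => ((n : ℝ) - ‖b + 1‖))
    · filter_upwards [eventually_ge_atTop 1] with n hn
      have h1 : (n : ℝ) - ‖b + 1‖ ≤ ‖b + 1 + (n : ℂ)‖ := by
        have h0 : ‖(b + 1 + (n : ℂ)) - (b + 1)‖ ≤ ‖b + 1 + (n : ℂ)‖ + ‖b + 1‖ :=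
          norm_sub_le _ _
        simp only [add_sub_cancel_left, Complex.norm_natCast] at h0
        linarith
      have h2 : (1 : ℝ) ≤ (n : ℝ) + 1 := by
        have : (0:ℝ) ≤ (n:ℝ) := Nat.cast_nonneg n
        linarith
      have h3 : (0:ℝ) ≤ ‖b + 1 + (n : ℂ)‖ := norm_nonneg _
      nlinarith [norm_nonneg (b+1)]
    · exact tendsto_atTop_add_const_right atTop (-‖b + 1‖)
        (tendsto_natCast_atTop_atTop) |>.congr (fun n => by ring)
  have h2 : ∀ᶠ n : ℕ in atTop, C * ‖z‖ ≤ (1/2) * (‖b + 1 + (n : ℂ)‖ * ((n:ℝ) + 1)) := by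
    filter_upwards [hD.eventually_ge_atTop (2 * (C * ‖z‖))] with n hn
    linarith
  filter_upwards [hw, h2, hD.eventually_gt_atTop 0] with n hwn hn hDpos
  rw [norm_mul, norm_mul, norm_gcRho_succ b z hb n]
  set D := ‖b + 1 + (n : ℂ)‖ * ((n : ℝ) + 1) with hDdef
  calc ‖w (n+1)‖ * (‖gcRho b z n‖ * (‖z‖ / D))
      ≤ (C * ‖w n‖) * (‖gcRho b z n‖ * (‖z‖ / D)) := by
        apply mul_le_mul_of_nonneg_right hwn; positivity
    _ = (‖w n‖ * ‖gcRho b z n‖) * ((C * ‖z‖) / D) := by ring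
    _ ≤ (‖w n‖ * ‖gcRho b z n‖) * ((1/2 * D) / D) := by
        apply mul_le_mul_of_nonneg_left _ (by positivity)
        gcongr
    _ = 1/2 * (‖w n‖ * ‖gcRho b z n‖) := by
        rw [mul_div_assoc, div_self hDpos.ne', mul_one]; ring

lemma ev_norm_ge (c : ℂ) (A : ℝ) : ∀ᶠ n : ℕ in atTop, A ≤ ‖(n : ℂ) - c‖ := by
  filter_upwards [eventually_ge_atTop ⌈A + ‖c‖⌉₊] with n hn
  have h1 : A + ‖c‖ ≤ (n : ℝ) := le_trans (Nat.le_ceil _) (Nat.cast_le.2 hn)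
  have h0 : ‖(n : ℂ)‖ - ‖c‖ ≤ ‖(n : ℂ) - c‖ := norm_sub_norm_le _ _
  rw [Complex.norm_natCast] at h0
  linarith

lemma ev_norm_ge' (c : ℂ) (A : ℝ) : ∀ᶠ n : ℕ in atTop, A ≤ ‖c - (n : ℂ)‖ := by
  filter_upwards [ev_norm_ge c A] with n hn
  rwa [norm_sub_rev]

lemma ev_one_div_ratio (c : ℂ) :
    ∀ᶠ n : ℕ in atTop, ‖(fun x : ℕ => 1 / (c - (x : ℂ))) (n + 1)‖
      ≤ 2 * ‖(fun x : ℕ => 1 / (c - (x : ℂ))) n‖ := by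
  filter_upwards [ev_norm_ge' c 1, (tendsto_add_atTop_nat 1).eventually (ev_norm_ge' c 1)]
    with n hn hn1
  simp only [norm_div, norm_one] at *
  have pos1 : (0:ℝ) < ‖c - ((n + 1 : ℕ) : ℂ)‖ := lt_of_lt_of_le one_pos hn1
  have pos0 : (0:ℝ) < ‖c - (n : ℂ)‖ := lt_of_lt_of_le one_pos hn
  have key : ‖c - ((n : ℂ))‖ ≤ 2 * ‖c - ((n + 1 : ℕ) : ℂ)‖ := by
    have h2 : ‖c - (n : ℂ)‖ = ‖(c - ((n + 1 : ℕ) : ℂ)) + 1‖ := by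
      push_cast; ring_nf
    have h3 : ‖(c - ((n + 1 : ℕ) : ℂ)) + 1‖ ≤ ‖c - ((n + 1 : ℕ) : ℂ)‖ + 1 := by
      simpa using norm_add_le (c - ((n + 1 : ℕ) : ℂ)) 1
    rw [h2]; linarith
  have h4 : 2 * (1 / ‖c - (n : ℂ)‖) = 2 / ‖c - (n : ℂ)‖ := by ring
  rw [h4, div_le_div_iff₀ pos1 pos0, one_mul]
  linarith

lemma ev_cast_ratio :
    ∀ᶠ n : ℕ in atTop, ‖(fun x : ℕ => (x : ℂ)) (n + 1)‖
      ≤ 2 * ‖(fun x : ℕ => (x : ℂ)) n‖ := by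
  filter_upwards [eventually_ge_atTop 1] with n hn
  simp only [Complex.norm_natCast]
  have : (1:ℝ) ≤ (n:ℝ) := by exact_mod_cast hn
  push_cast
  linarith

lemma ev_w3_ratio (b t : ℂ) :
    ∀ᶠ n : ℕ in atTop, ‖(fun x : ℕ => (x : ℂ) * (b + (x : ℂ)) / (t + 1 - (x : ℂ))) (n + 1)‖
      ≤ 8 * ‖(fun x : ℕ => (x : ℂ) * (b + (x : ℂ)) / (t + 1 - (x : ℂ))) n‖ := by
  filter_upwards [eventually_ge_atTop 1, ev_norm_ge (-b) 1,
    ev_norm_ge' (t + 1) 1, (tendsto_add_atTop_nat 1).eventually (ev_norm_ge' (t + 1) 1)]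
    with n hn hb1 hd1 hd2
  have hbn : (1:ℝ) ≤ ‖b + (n:ℂ)‖ := by
    rw [show b + (n:ℂ) = (n:ℂ) - (-b) by ring]; exact hb1
  simp only [norm_div, norm_mul, Complex.norm_natCast]
  have hn' : (1:ℝ) ≤ (n:ℝ) := by exact_mod_cast hn
  have a1 : ((n+1:ℕ):ℝ) ≤ 2 * (n:ℝ) := by push_cast; linarith
  have b1 : ‖b + ((n+1:ℕ):ℂ)‖ ≤ 2 * ‖b + (n:ℂ)‖ := by
    have h2 : ‖b + ((n+1:ℕ):ℂ)‖ = ‖(b + (n:ℂ)) + 1‖ := by push_cast; ring_nf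
    have h3 : ‖(b + (n:ℂ)) + 1‖ ≤ ‖b + (n:ℂ)‖ + 1 := by simpa using norm_add_le (b + (n:ℂ)) 1
    rw [h2]; linarith
  have c1 : ‖t + 1 - (n:ℂ)‖ ≤ 2 * ‖t + 1 - ((n+1:ℕ):ℂ)‖ := by
    have h2 : ‖t + 1 - (n:ℂ)‖ = ‖(t + 1 - ((n+1:ℕ):ℂ)) + 1‖ := by push_cast; ring_nf
    have h3 : ‖(t + 1 - ((n+1:ℕ):ℂ)) + 1‖ ≤ ‖t + 1 - ((n+1:ℕ):ℂ)‖ + 1 := by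
      simpa using norm_add_le (t + 1 - ((n+1:ℕ):ℂ)) 1
    rw [h2]; linarith
  have pos1 : (0:ℝ) < ‖t + 1 - ((n+1:ℕ):ℂ)‖ := lt_of_lt_of_le one_pos hd2
  have pos0 : (0:ℝ) < ‖t + 1 - (n:ℂ)‖ := lt_of_lt_of_le one_pos hd1
  have h8 : (8:ℝ) * ((n:ℝ) * ‖b + (n:ℂ)‖ / ‖t + 1 - (n:ℂ)‖)
      = (8 * ((n:ℝ) * ‖b + (n:ℂ)‖)) / ‖t + 1 - (n:ℂ)‖ := by ring
  rw [h8, div_le_div_iff₀ pos1 pos0]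
  have k1 : ((n+1:ℕ):ℝ) * ‖b + ((n+1:ℕ):ℂ)‖ ≤ (2*(n:ℝ)) * (2*‖b + (n:ℂ)‖) :=
    mul_le_mul a1 b1 (norm_nonneg _) (by positivity)
  have k2 : ((n+1:ℕ):ℝ) * ‖b + ((n+1:ℕ):ℂ)‖ * ‖t + 1 - (n:ℂ)‖
      ≤ ((2*(n:ℝ)) * (2*‖b + (n:ℂ)‖)) * (2 * ‖t + 1 - ((n+1:ℕ):ℂ)‖) :=
    mul_le_mul k1 c1 (norm_nonneg _) (by positivity)
  calc ((n+1:ℕ):ℝ) * ‖b + ((n+1:ℕ):ℂ)‖ * ‖t + 1 - (n:ℂ)‖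
      ≤ ((2*(n:ℝ)) * (2*‖b + (n:ℂ)‖)) * (2 * ‖t + 1 - ((n+1:ℕ):ℂ)‖) := k2
    _ = 8 * ((n:ℝ) * ‖b + (n:ℂ)‖) * ‖t + 1 - ((n+1:ℕ):ℂ)‖ := by ring

/-- the Stieltjes transform `S(t) = ∑_{x≥0} ρ(x)/(t-x)` of the generalized
Charlier weight `ρ(x) = z^x/((b+1)_x x!)` satisfies
`(t+1)(t+b+1) S(t+1) - z S(t) = (t+b+1) ν₀ + ν₁`. -/
theorem generalized_charlier_stieltjes (b z : ℂ)
    (hb : ∀ k : ℕ, b + 1 + (k : ℂ) ≠ 0)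
    (t : ℂ) (ht : ∀ x : ℕ, t ≠ (x : ℂ)) (ht1 : ∀ x : ℕ, t + 1 ≠ (x : ℂ)) :
    (t + 1) * (t + b + 1) * (∑' x : ℕ,
        z ^ x / (poch (b + 1) x * (x.factorial : ℂ)) * (1 / (t + 1 - (x : ℂ))))
      - z * (∑' x : ℕ,
        z ^ x / (poch (b + 1) x * (x.factorial : ℂ)) * (1 / (t - (x : ℂ))))
      = (t + b + 1) * (∑' x : ℕ, z ^ x / (poch (b + 1) x * (x.factorial : ℂ)))
          + ∑' x : ℕ, (x : ℂ) * (z ^ x / (poch (b + 1) x * (x.factorial : ℂ))) := by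
  have hne1 : ∀ x : ℕ, t + 1 - (x : ℂ) ≠ 0 := fun x => sub_ne_zero.2 (ht1 x)
  have hne : ∀ x : ℕ, t - (x : ℂ) ≠ 0 := fun x => sub_ne_zero.2 (ht x)
  -- summability facts
  have hsA : Summable (fun x : ℕ => (1 / (t + 1 - (x : ℂ))) * gcRho b z x) :=
    summable_mul_gcRho b z hb _ 2 (ev_one_div_ratio (t + 1))
  have hsB : Summable (fun x : ℕ => (1 / (t - (x : ℂ))) * gcRho b z x) :=
    summable_mul_gcRho b z hb _ 2 (ev_one_div_ratio t)
  have hsg : Summable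
      (fun x : ℕ => ((x : ℂ) * (b + (x : ℂ)) / (t + 1 - (x : ℂ))) * gcRho b z x) :=
    summable_mul_gcRho b z hb _ 8 (ev_w3_ratio b t)
  have hs0 : Summable (gcRho b z) := by
    have := summable_mul_gcRho b z hb (fun _ => (1 : ℂ)) 1
      (Filter.Eventually.of_forall fun n => by simp)
    simpa using this
  have hs1 : Summable (fun x : ℕ => (x : ℂ) * gcRho b z x) :=
    summable_mul_gcRho b z hb _ 2 ev_cast_ratio
  -- step 1: z * S(t) = ∑' g
  have key1 : ∀ x : ℕ, z * (gcRho b z x * (1 / (t - (x : ℂ))))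
      = (((x + 1 : ℕ) : ℂ) * (b + ((x + 1 : ℕ) : ℂ)) / (t + 1 - ((x + 1 : ℕ) : ℂ)))
          * gcRho b z (x + 1) := by
    intro x
    have hx1 : ((x : ℂ) + 1) ≠ 0 := by
      have : ((x : ℂ) + 1) = ((x + 1 : ℕ) : ℂ) := by push_cast; ring
      rw [this]; exact Nat.cast_ne_zero.2 (Nat.succ_ne_zero x)
    rw [gcRho_succ b z hb x]
    push_cast
    have hbx := hb x
    have htx := hne x
    have htx' : t + 1 - ((x : ℂ) + 1) ≠ 0 := by rw [show t + 1 - ((x : ℂ) + 1) = t - (x : ℂ) by ring]; exact htx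
    have hρ : gcRho b z x ≠ 0 → True := fun _ => trivial
    field_simp
    ring
  have step1 : z * (∑' x : ℕ, gcRho b z x * (1 / (t - (x : ℂ))))
      = ∑' x : ℕ, ((x : ℂ) * (b + (x : ℂ)) / (t + 1 - (x : ℂ))) * gcRho b z x := by
    rw [← tsum_mul_left]
    rw [tsum_congr key1]
    have h2 := Summable.tsum_eq_zero_add hsg
    have hg0 : ((0 : ℕ) : ℂ) * (b + ((0 : ℕ) : ℂ)) / (t + 1 - ((0 : ℕ) : ℂ))
        * gcRho b z 0 = 0 := by simp
    rw [hg0, zero_add] at h2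
    exact h2.symm
  -- rewrite statement sums in terms of gcRho
  have e1 : (∑' x : ℕ, z ^ x / (poch (b + 1) x * (x.factorial : ℂ)) * (1 / (t + 1 - (x : ℂ))))
      = ∑' x : ℕ, gcRho b z x * (1 / (t + 1 - (x : ℂ))) := rfl
  have e2 : (∑' x : ℕ, z ^ x / (poch (b + 1) x * (x.factorial : ℂ)) * (1 / (t - (x : ℂ))))
      = ∑' x : ℕ, gcRho b z x * (1 / (t - (x : ℂ))) := rfl
  have e3 : (∑' x : ℕ, z ^ x / (poch (b + 1) x * (x.factorial : ℂ)))
      = ∑' x : ℕ, gcRho b z x := rfl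
  have e4 : (∑' x : ℕ, (x : ℂ) * (z ^ x / (poch (b + 1) x * (x.factorial : ℂ))))
      = ∑' x : ℕ, (x : ℂ) * gcRho b z x := rfl
  rw [e1, e2, e3, e4, step1]
  have hsA' : Summable
      (fun x : ℕ => (t + 1) * (t + b + 1) * (gcRho b z x * (1 / (t + 1 - (x : ℂ))))) :=
    (hsA.congr fun x => mul_comm _ _).mul_left _
  have step2 : (t + 1) * (t + b + 1) * (∑' x : ℕ, gcRho b z x * (1 / (t + 1 - (x : ℂ))))
      = ∑' x : ℕ, (t + 1) * (t + b + 1) * (gcRho b z x * (1 / (t + 1 - (x : ℂ)))) :=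
    (tsum_mul_left).symm
  rw [step2, ← Summable.tsum_sub hsA' hsg]
  have key2 : ∀ x : ℕ, (t + 1) * (t + b + 1) * (gcRho b z x * (1 / (t + 1 - (x : ℂ))))
      - ((x : ℂ) * (b + (x : ℂ)) / (t + 1 - (x : ℂ))) * gcRho b z x
      = (t + b + 1) * gcRho b z x + (x : ℂ) * gcRho b z x := by
    intro x
    have htx := hne1 x
    field_simp
    ring
  rw [tsum_congr key2, Summable.tsum_add (hs0.mul_left (t + b + 1)) hs1, tsum_mul_left]
end

section
/- Let z, M ∈ ℂ and let t ∈ ℂ satisfy t ≠ x and t + 1 ≠ x for every x ∈ ℕ. Define the Stieltjes transform of the Uvarov-modified Charlier weight with mass M at ω = 0 by S_U(t) = ∑_{x=0}^∞ (z^x/x!)·1/(t − x) + M/t. Then (t + 1)·S_U(t + 1) − z·S_U(t) = e^z + M·(1 − z/t). -/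
lemma charlier_summable (z t : ℂ) : Summable (fun x : ℕ => z ^ x / (x.factorial : ℂ) * (1 / (t - (x : ℂ)))) := by
  apply Summable.of_norm_bounded_eventually_nat (g := fun x : ℕ => ‖z‖ ^ x / (x.factorial : ℝ))
    (Real.summable_pow_div_factorial ‖z‖)
  filter_upwards [Filter.eventually_ge_atTop (⌈‖t‖⌉₊ + 1)] with n hn
  have hnt : ‖t‖ + 1 ≤ (n : ℝ) := by
    have := Nat.le_ceil ‖t‖
    have : (⌈‖t‖⌉₊ + 1 : ℝ) ≤ n := by exact_mod_cast Nat.cast_le.2 hn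
    linarith [Nat.le_ceil ‖t‖]
  have hd : (1 : ℝ) ≤ ‖t - (n : ℂ)‖ := by
    have h1 : ‖(n : ℂ)‖ - ‖t‖ ≤ ‖t - n‖ := by
      calc ‖(n : ℂ)‖ - ‖t‖ ≤ ‖(n : ℂ) - t‖ := norm_sub_norm_le _ _
        _ = ‖t - n‖ := (norm_sub_rev _ _)
    have h2 : ‖(n : ℂ)‖ = (n : ℝ) := by simp
    linarith
  have hdpos : (0:ℝ) < ‖t - (n : ℂ)‖ := lt_of_lt_of_le one_pos hd
  rw [norm_mul, norm_div, norm_div, norm_one]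
  have : ‖z ^ n‖ / ‖(n.factorial : ℂ)‖ = ‖z‖ ^ n / (n.factorial : ℝ) := by
    simp [norm_pow, Complex.norm_natCast]
  rw [this]
  have h3 : 1 / ‖t - (n : ℂ)‖ ≤ 1 := by
    rw [div_le_one hdpos]; exact hd
  have h4 : 0 ≤ ‖z‖ ^ n / (n.factorial : ℝ) := by positivity
  calc ‖z‖ ^ n / (n.factorial : ℝ) * (1 / ‖t - (n : ℂ)‖) ≤ ‖z‖ ^ n / (n.factorial : ℝ) * 1 :=
        mul_le_mul_of_nonneg_left h3 h4
    _ = _ := mul_one _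

/-- the Stieltjes transform
`S_U(t) = ∑_{x≥0} (z^x/x!)/(t-x) + M/t` of the Uvarov-modified Charlier weight with mass
`M` at `ω = 0` satisfies `(t+1) S_U(t+1) - z S_U(t) = e^z + M (1 - z/t)`. -/
theorem uvarov_charlier_stieltjes (z M t : ℂ)
    (ht : ∀ x : ℕ, t ≠ (x : ℂ)) (ht1 : ∀ x : ℕ, t + 1 ≠ (x : ℂ)) :
    (t + 1) * ((∑' x : ℕ, z ^ x / (x.factorial : ℂ) * (1 / (t + 1 - (x : ℂ)))) + M / (t + 1))
      - z * ((∑' x : ℕ, z ^ x / (x.factorial : ℂ) * (1 / (t - (x : ℂ)))) + M / t)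
      = Complex.exp z + M * (1 - z / t) := by
  have hd1 : ∀ x : ℕ, t + 1 - (x : ℂ) ≠ 0 := fun x => sub_ne_zero.2 (ht1 x)
  have hd0 : ∀ x : ℕ, t - (x : ℂ) ≠ 0 := fun x => sub_ne_zero.2 (ht x)
  have ht0 : t ≠ 0 := by simpa using ht 0
  have ht10 : t + 1 ≠ 0 := by simpa using ht1 0
  set f0 : ℕ → ℂ := fun x => z ^ x / (x.factorial : ℂ) * (1 / (t - (x : ℂ))) with hf0
  have hs0 : Summable f0 := charlier_summable z t
  set f1 : ℕ → ℂ := fun x => z ^ x / (x.factorial : ℂ) * (1 / (t + 1 - (x : ℂ))) with hf1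
  have hs1 : Summable f1 := charlier_summable z (t + 1)
  set h : ℕ → ℂ := fun x => z ^ x / (x.factorial : ℂ) * ((x : ℂ) / (t + 1 - (x : ℂ))) with hh
  have hshift : ∀ y : ℕ, h (y + 1) = z * f0 y := by
    intro y
    have hden : t - (y : ℂ) ≠ 0 := hd0 y
    have hy : ((y : ℂ) + 1) ≠ 0 := Nat.cast_add_one_ne_zero y
    have hfy : (y.factorial : ℂ) ≠ 0 := Nat.cast_ne_zero.2 y.factorial_ne_zero
    have hd : t + 1 - ((y + 1 : ℕ) : ℂ) = t - y := by push_cast; ring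
    simp only [hh, hf0, hd]
    rw [show (((y + 1 : ℕ)) : ℂ) = (y : ℂ) + 1 from by push_cast; ring,
        show (((y + 1).factorial : ℕ) : ℂ) = ((y : ℂ) + 1) * (y.factorial : ℂ) from by
          push_cast [Nat.factorial_succ]; ring,
        pow_succ]
    field_simp
  have hsh : Summable h := by
    rw [← summable_nat_add_iff 1]
    simpa [hshift] using hs0.mul_left z
  have hkey : ∀ x : ℕ, (t + 1) * f1 x = z ^ x / (x.factorial : ℂ) + h x := by
    intro x
    have hfx : ((x.factorial : ℂ)) ≠ 0 := by exact_mod_cast Nat.cast_ne_zero.2 x.factorial_ne_zero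
    simp only [hf1, hh]
    field_simp [hfx, hd1 x]
    ring
  have hexp : Summable (fun x : ℕ => z ^ x / (x.factorial : ℂ)) := by
    exact_mod_cast (NormedSpace.expSeries_div_summable z)
  have hsum1 : (t + 1) * ∑' x, f1 x = Complex.exp z + z * ∑' x, f0 x := by
    rw [← tsum_mul_left]
    rw [tsum_congr hkey, Summable.tsum_add hexp hsh]
    congr 1
    · rw [Complex.exp_eq_exp_ℂ, NormedSpace.exp_eq_tsum_div]
    · rw [Summable.tsum_eq_zero_add hsh]
      simp only [hshift]
      simp [hh, tsum_mul_left]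
  have hM1 : (t + 1) * (M / (t + 1)) = M := by field_simp
  rw [mul_add, mul_add, hsum1, hM1]
  field_simp
  ring
end
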